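/- If p ∈ ℝ[x] satisfies p^k ∈ I for some ideal I ⊆ ℝ[x] and some k ∈ ℕ, then p + 1 is congruent modulo I to the square of the polynomial Σ_{i=0}^{k-1} C(1/2, i) p^i, where C(1/2, i) denotes the generalized binomial coefficient. In particular, the image of p + 1 in ℝ[x]/I is a square. -/

import Mathlib

open MvPolynomial Matrix
attribute [local instance] Matrix.frobeniusNormedAddCommGroup

noncomputable section

abbrev RP (n : ℕ) := MvPolynomial (Fin n) ℝ

/-- Evaluation of the linear pencil `A₀ + ∑ xᵢ Aᵢ` at a point `x ∈ ℝⁿ`. -/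
def pencilEval {n α : ℕ} (A0 : Matrix (Fin α) (Fin α) ℝ) (A : Fin n → Matrix (Fin α) (Fin α) ℝ)
    (x : Fin n → ℝ) : Matrix (Fin α) (Fin α) ℝ :=
  A0 + ∑ i, x i • A i

/-- The linear pencil `A₀ + ∑ xᵢ Aᵢ` as a matrix of polynomials. -/
def pencilPoly {n α : ℕ} (A0 : Matrix (Fin α) (Fin α) ℝ) (A : Fin n → Matrix (Fin α) (Fin α) ℝ) :
    Matrix (Fin α) (Fin α) (RP n) :=
  A0.map C + ∑ i, (X i : RP n) • (A i).map C

/-- `v^* M v` for a matrix of polynomials. -/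
def quadForm {n α : ℕ} (M : Matrix (Fin α) (Fin α) (RP n)) (v : Fin α → RP n) : RP n :=
  v ⬝ᵥ (M *ᵥ v)

/-- A sum of squares of polynomials. -/
def IsSos {n : ℕ} (p : RP n) : Prop := ∃ (k : ℕ) (q : Fin k → RP n), p = ∑ i, q i ^ 2

/-- An sos-matrix: a finite sum `∑ vⱼ vⱼ^*` with `vⱼ` vectors of polynomials. -/
def IsSosMatrix {n α : ℕ} (S : Matrix (Fin α) (Fin α) (RP n)) : Prop :=
  ∃ (k : ℕ) (v : Fin k → Fin α → RP n), S = ∑ j, Matrix.vecMulVec (v j) (v j)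

/-- Membership in the quadratic module `M_A` associated to the pencil. -/
def InQuadModule {n α : ℕ} (A0 : Matrix (Fin α) (Fin α) ℝ)
    (A : Fin n → Matrix (Fin α) (Fin α) ℝ) (p : RP n) : Prop :=
  ∃ s, IsSos s ∧ ∃ (k : ℕ) (v : Fin k → Fin α → RP n),
    p = s + ∑ j, quadForm (pencilPoly A0 A) (v j)

/-- Strong infeasibility: positive distance (Frobenius norm) between the range of the
pencil and the PSD cone. -/
def StronglyInfeasible {n α : ℕ} (A0 : Matrix (Fin α) (Fin α) ℝ)
    (A : Fin n → Matrix (Fin α) (Fin α) ℝ) : Prop :=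
  ∃ ε > (0:ℝ), ∀ (x : Fin n → ℝ) (B : Matrix (Fin α) (Fin α) ℝ), B.PosSemidef →
    ε ≤ dist (pencilEval A0 A x) B
/-- The generalized binomial coefficient `C(1/2, i) = (1/2)(1/2−1)⋯(1/2−i+1)/i!`. -/
def halfChoose (i : ℕ) : ℝ :=
  (∏ j ∈ Finset.range i, ((1:ℝ)/2 - j)) / (Nat.factorial i)


lemma descPochhammer_smeval_half (i : ℕ) :
    (descPochhammer ℤ i).smeval ((1:ℝ)/2) = ∏ j ∈ Finset.range i, ((1:ℝ)/2 - j) := by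
  induction i with
  | zero => simp [Polynomial.smeval_one]
  | succ m ih =>
    rw [descPochhammer_succ_right, Finset.prod_range_succ, ← ih]
    simp [Polynomial.smeval_mul, Polynomial.smeval_sub, Polynomial.smeval_X,
      Polynomial.smeval_natCast]

lemma halfChoose_eq (i : ℕ) : halfChoose i = Ring.choose ((1:ℝ)/2) i := by
  have h := Ring.descPochhammer_eq_factorial_smul_choose ((1:ℝ)/2) i
  rw [descPochhammer_smeval_half, nsmul_eq_mul] at h
  rw [halfChoose, h]
  field_simp

lemma halfChoose_conv (m : ℕ) :
    ∑ ij ∈ Finset.HasAntidiagonal.antidiagonal m, halfChoose ij.1 * halfChoose ij.2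
      = if m ≤ 1 then 1 else 0 := by
  simp_rw [halfChoose_eq]
  rw [← Ring.add_choose_eq m (Commute.all _ _)]
  have h1 : ((1:ℝ)/2 + 1/2) = ((1:ℕ):ℝ) := by norm_num
  rw [h1, Ring.choose_natCast]
  rcases m with _ | _ | m <;> simp [Nat.choose_eq_zero_of_lt]

/-- If `p^k ∈ I`, then `p + 1` is congruent mod `I` to the square of the truncated
binomial series `∑_{i<k} C(1/2,i) p^i`; in particular `p + 1` is a square mod `I`. -/
theorem stmt_14 {n : ℕ} (I : Ideal (RP n)) (p : RP n) (k : ℕ) (hk : 1 ≤ k)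
    (hpk : p ^ k ∈ I) :
    p + 1 - (∑ i ∈ Finset.range k, C (halfChoose i) * p ^ i) ^ 2 ∈ I := by
  classical
  have hsq : (∑ i ∈ Finset.range k, C (halfChoose i) * p ^ i) ^ 2
      = ∑ x ∈ Finset.range k ×ˢ Finset.range k,
          C (halfChoose x.1 * halfChoose x.2) * p ^ (x.1 + x.2) := by
    rw [sq, Finset.sum_mul_sum, Finset.sum_product]
    refine Finset.sum_congr rfl fun i _ => Finset.sum_congr rfl fun j _ => ?_
    rw [_root_.map_mul, pow_add]; ring
  set f : ℕ × ℕ → RP n := fun x => C (halfChoose x.1 * halfChoose x.2) * p ^ (x.1 + x.2) with hf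
  have hsplit := Finset.sum_filter_add_sum_filter_not (Finset.range k ×ˢ Finset.range k)
    (fun x => x.1 + x.2 < k) f
  have hB : ∑ x ∈ (Finset.range k ×ˢ Finset.range k).filter (fun x => ¬ x.1 + x.2 < k),
      f x ∈ I := by
    refine Ideal.sum_mem _ fun x hx => ?_
    have hkle : k ≤ x.1 + x.2 := not_lt.1 (Finset.mem_filter.1 hx).2
    obtain ⟨m, hm⟩ := Nat.exists_eq_add_of_le hkle
    rw [hf]
    simp only [hm, pow_add]
    rw [← mul_assoc]
    exact Ideal.mul_mem_right _ _ (Ideal.mul_mem_left _ _ hpk)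
  have hfilter : (Finset.range k ×ˢ Finset.range k).filter (fun x => x.1 + x.2 < k)
      = (Finset.range k).biUnion Finset.HasAntidiagonal.antidiagonal := by
    ext x
    simp only [Finset.mem_filter, Finset.mem_product, Finset.mem_range, Finset.mem_biUnion,
      Finset.HasAntidiagonal.mem_antidiagonal]
    constructor
    · rintro ⟨-, h⟩; exact ⟨x.1 + x.2, h, rfl⟩
    · rintro ⟨m, hm, rfl⟩; omega
  have hA : ∑ x ∈ (Finset.range k).biUnion Finset.HasAntidiagonal.antidiagonal, f x
      = ∑ m ∈ Finset.range k, (if m ≤ 1 then (1 : RP n) else 0) * p ^ m := by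
    rw [Finset.sum_biUnion]
    · refine Finset.sum_congr rfl fun m _ => ?_
      have : ∑ x ∈ Finset.HasAntidiagonal.antidiagonal m, f x
          = ∑ x ∈ Finset.HasAntidiagonal.antidiagonal m, C (halfChoose x.1 * halfChoose x.2) * p ^ m := by
        refine Finset.sum_congr rfl fun x hx => ?_
        rw [hf]; simp only
        rw [Finset.HasAntidiagonal.mem_antidiagonal.1 hx]
      rw [this, ← Finset.sum_mul, ← _root_.map_sum, halfChoose_conv, apply_ite C, _root_.map_one, _root_.map_zero]
    · intro a _ b _ hab
      refine Finset.disjoint_left.2 fun x hxa hxb => hab ?_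
      rw [← Finset.HasAntidiagonal.mem_antidiagonal.1 hxa, ← Finset.HasAntidiagonal.mem_antidiagonal.1 hxb]
  have hsum : ∑ m ∈ Finset.range k, (if m ≤ 1 then (1 : RP n) else 0) * p ^ m
      = if k = 1 then 1 else 1 + p := by
    rcases eq_or_lt_of_le hk with h1 | h2
    · simp [← h1]
    · rw [if_neg (by omega)]
      rw [← Finset.sum_subset (Finset.range_subset_range.2 h2)
        (fun m _ hm => by rw [if_neg (by simp at hm; omega), zero_mul])]
      simp [Finset.sum_range_succ]
  have hfin : p + 1 - (∑ i ∈ Finset.range k, C (halfChoose i) * p ^ i) ^ 2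
      = (p + 1 - (if k = 1 then 1 else 1 + p))
        - ∑ x ∈ (Finset.range k ×ˢ Finset.range k).filter (fun x => ¬ x.1 + x.2 < k), f x := by
    rw [hsq, ← hsplit, hfilter, hA, hsum]; ring
  rw [hfin]
  refine Ideal.sub_mem _ ?_ hB
  split_ifs with h1
  · have : p + 1 - 1 = p ^ k := by rw [h1, pow_one]; ring
    rw [this]; exact hpk
  · have : p + 1 - (1 + p) = 0 := by ring
    rw [this]; exact Ideal.zero_mem _
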